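/- arXiv:2501.17877 — 4 statements merged into one kernel-verified Lean document; each statement's English description precedes it below -/
import Mathlib

section
/- Let (X, μ) be a measure space with finite total mass m₀ := μ(X) ∈ (0, ∞), let p ≥ 2 be real, and let v : X → ℝ be a function in L^p(μ) with ∫_X v dμ = 0 and v not identically zero in L^p(μ). Define φ : ℝ → ℝ by φ(t) := (∫_X |1 + t v|^p dμ)^{2/p}. Then φ(0) = m₀^{2/p}, φ is twice differentiable with φ'(0) = 0, and for every t ∈ ℝ the second derivative satisfies φ''(t) ≤ 2(p−1) (∫_X |v|^p dμ)^{2/p}. -/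
open MeasureTheory Real Filter
open scoped ENNReal

-- second-derivative helper: d/da (|a|^(p-2) * a) = (p-1)|a|^(p-2), for p ≥ 2
lemma aux_deriv2 {p : ℝ} (hp : 2 ≤ p) (a : ℝ) :
    HasDerivAt (fun a : ℝ => |a| ^ (p - 2) * a) ((p - 1) * |a| ^ (p - 2)) a := by
  rcases eq_or_lt_of_le hp with hp2 | hp2
  · -- p = 2
    subst hp2
    simp only [sub_self, Real.rpow_zero, one_mul]
    norm_num
    exact hasDerivAt_id a
  · rcases eq_or_ne a 0 with rfl | ha
    · -- a = 0, p > 2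
      have hq : (0:ℝ) < p - 2 := by linarith
      rw [hasDerivAt_iff_tendsto_slope]
      have hval : (p - 1) * |(0:ℝ)| ^ (p - 2) = 0 := by
        simp [Real.zero_rpow hq.ne']
      rw [hval]
      have hcont : Filter.Tendsto (fun a : ℝ => |a| ^ (p - 2)) (nhds 0) (nhds 0) := by
        have h1 : ContinuousAt (fun a : ℝ => |a| ^ (p - 2)) 0 := by
          apply ContinuousAt.rpow_const (continuous_abs.continuousAt)
          right; exact hq.le
        have := h1.tendsto
        simpa [Real.zero_rpow hq.ne'] using this
      apply Filter.Tendsto.congr' _ (hcont.mono_left nhdsWithin_le_nhds)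
      filter_upwards [self_mem_nhdsWithin] with b hb
      have hb' : b ≠ 0 := hb
      simp [slope_def_field, hb', mul_div_assoc, div_self hb']
    · -- a ≠ 0
      have habs : HasDerivAt (fun x : ℝ => |x|) (SignType.sign a : ℝ) a := hasDerivAt_abs ha
      have h1 : HasDerivAt (fun x : ℝ => |x| ^ (p - 2))
          ((SignType.sign a : ℝ) * (p - 2) * |a| ^ (p - 2 - 1)) a :=
        habs.rpow_const (Or.inl (abs_ne_zero.2 ha))
      have h2 := h1.mul (hasDerivAt_id a)
      refine h2.congr_deriv (Eq.symm ?_)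
      have hsa : (SignType.sign a : ℝ) * a = |a| := by
        rcases lt_or_gt_of_ne ha with h | h
        · simp [sign_neg h, abs_of_neg h]
        · simp [sign_pos h, abs_of_pos h]
      have habsne : |a| ≠ 0 := abs_ne_zero.2 ha
      have hpow : |a| ^ (p - 2 - 1) * |a| = |a| ^ (p - 2) := by
        rw [← Real.rpow_add_one habsne (p - 2 - 1)]
        ring_nf
      calc (p - 1) * |a| ^ (p - 2)
          = (p - 2) * (|a| ^ (p - 2 - 1) * |a|) + |a| ^ (p - 2) * 1 := by rw [hpow]; ring
        _ = (SignType.sign a : ℝ) * (p - 2) * |a| ^ (p - 2 - 1) * a + |a| ^ (p - 2) * 1 := by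
            rw [show (SignType.sign a : ℝ) * (p - 2) * |a| ^ (p - 2 - 1) * a
                = (p - 2) * (|a| ^ (p - 2 - 1) * ((SignType.sign a : ℝ) * a)) by ring, hsa]

lemma aux_add_rpow_le {a b q : ℝ} (ha : 0 ≤ a) (hb : 0 ≤ b) (hq : 0 ≤ q) :
    (a + b) ^ q ≤ 2 ^ q * (a ^ q + b ^ q) := by
  have h1 : a + b ≤ 2 * max a b := by
    rcases le_total a b with h | h
    · simp [max_eq_right h]; linarith
    · simp [max_eq_left h]; linarith
  calc (a + b) ^ q ≤ (2 * max a b) ^ q :=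
        Real.rpow_le_rpow (by positivity) h1 hq
    _ = 2 ^ q * (max a b) ^ q := Real.mul_rpow (by norm_num) (le_max_iff.2 (Or.inl ha))
    _ ≤ 2 ^ q * (a ^ q + b ^ q) := by
        have : (max a b) ^ q ≤ a ^ q + b ^ q := by
          rcases le_total a b with h | h
          · rw [max_eq_right h]
            exact le_add_of_nonneg_left (Real.rpow_nonneg ha q)
          · rw [max_eq_left h]
            exact le_add_of_nonneg_right (Real.rpow_nonneg hb q)
        have h2 : (0:ℝ) ≤ (2:ℝ) ^ q := Real.rpow_nonneg (by norm_num) q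
        exact mul_le_mul_of_nonneg_left this h2

lemma aux_rpow_mul_self {x : ℝ} (hx : 0 ≤ x) {q : ℝ} (hq : 0 < q) :
    x ^ (q - 1) * x = x ^ q := by
  rcases eq_or_lt_of_le hx with rfl | hx'
  · rw [Real.zero_rpow hq.ne', mul_zero]
  · rw [← Real.rpow_add_one hx'.ne' (q - 1)]
    ring_nf

section main

set_option linter.unusedSectionVars false

variable {X : Type*} [MeasurableSpace X] {μ : Measure X}

noncomputable def F0 (p : ℝ) (v : X → ℝ) (t : ℝ) (x : X) : ℝ := |1 + t * v x| ^ p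
noncomputable def F1 (p : ℝ) (v : X → ℝ) (t : ℝ) (x : X) : ℝ :=
  p * |1 + t * v x| ^ (p - 2) * (1 + t * v x) * v x
noncomputable def F2 (p : ℝ) (v : X → ℝ) (t : ℝ) (x : X) : ℝ :=
  p * (p - 1) * |1 + t * v x| ^ (p - 2) * (v x * v x)

lemma hasDerivAt_F0 {p : ℝ} (hp : 2 ≤ p) (v : X → ℝ) (x : X) (t : ℝ) :
    HasDerivAt (fun t => F0 p v t x) (F1 p v t x) t := by
  have hg : HasDerivAt (fun s : ℝ => 1 + s * v x) (v x) t :=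
    (hasDerivAt_mul_const (v x)).const_add 1
  have h1 := (hasDerivAt_abs_rpow (1 + t * v x) (show (1:ℝ) < p by linarith)).comp t hg
  have heq : (fun s : ℝ => F0 p v s x) = (fun a : ℝ => |a| ^ p) ∘ (fun s : ℝ => 1 + s * v x) := rfl
  rw [heq]
  exact h1

lemma hasDerivAt_F1 {p : ℝ} (hp : 2 ≤ p) (v : X → ℝ) (x : X) (t : ℝ) :
    HasDerivAt (fun t => F1 p v t x) (F2 p v t x) t := by
  have hg : HasDerivAt (fun s : ℝ => 1 + s * v x) (v x) t :=
    (hasDerivAt_mul_const (v x)).const_add 1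
  have h1 := (((aux_deriv2 hp (1 + t * v x)).comp t hg).const_mul p).mul_const (v x)
  have h2 : HasDerivAt (fun t => F1 p v t x)
      (p * ((p - 1) * |1 + t * v x| ^ (p - 2) * v x) * v x) t := by
    apply h1.congr_of_eventuallyEq
    filter_upwards with s
    show F1 p v s x = p * ((fun a : ℝ => |a| ^ (p-2) * a) ∘ (fun s : ℝ => 1 + s * v x)) s * v x
    simp only [F1, Function.comp_apply]
    ring
  convert h2 using 1
  simp only [F2]
  ring

variable [IsFiniteMeasure μ]

lemma meas_F0 {p : ℝ} (hp : 2 ≤ p) {v : X → ℝ} (hv : AEStronglyMeasurable v μ) (t : ℝ) :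
    AEStronglyMeasurable (F0 p v t) μ := by
  have hc : Continuous fun a : ℝ => |1 + t * a| ^ p := by
    apply Continuous.rpow_const
    · exact (continuous_const.add (continuous_const.mul continuous_id)).abs
    · intro a; right; linarith
  exact hc.comp_aestronglyMeasurable hv

lemma meas_F1 {p : ℝ} (hp : 2 ≤ p) {v : X → ℝ} (hv : AEStronglyMeasurable v μ) (t : ℝ) :
    AEStronglyMeasurable (F1 p v t) μ := by
  have hc : Continuous fun a : ℝ => p * |1 + t * a| ^ (p - 2) * (1 + t * a) * a := by
    have h1 : Continuous fun a : ℝ => 1 + t * a :=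
      continuous_const.add (continuous_const.mul continuous_id)
    have h2 : Continuous fun a : ℝ => |1 + t * a| ^ (p - 2) :=
      Continuous.rpow_const h1.abs (fun a => Or.inr (by linarith))
    exact ((continuous_const.mul h2).mul h1).mul continuous_id
  exact hc.comp_aestronglyMeasurable hv

lemma meas_F2 {p : ℝ} (hp : 2 ≤ p) {v : X → ℝ} (hv : AEStronglyMeasurable v μ) (t : ℝ) :
    AEStronglyMeasurable (F2 p v t) μ := by
  have hc : Continuous fun a : ℝ => p * (p - 1) * |1 + t * a| ^ (p - 2) * (a * a) := by
    have h1 : Continuous fun a : ℝ => 1 + t * a :=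
      continuous_const.add (continuous_const.mul continuous_id)
    have h2 : Continuous fun a : ℝ => |1 + t * a| ^ (p - 2) :=
      Continuous.rpow_const h1.abs (fun a => Or.inr (by linarith))
    exact (continuous_const.mul h2).mul (continuous_id.mul continuous_id)
  exact hc.comp_aestronglyMeasurable hv

lemma memℒp_aff {p : ℝ} {v : X → ℝ} (hv : MemLp v (ENNReal.ofReal p) μ) (t : ℝ) :
    MemLp (fun x => 1 + t * v x) (ENNReal.ofReal p) μ :=
  (memLp_const (1:ℝ)).add (hv.const_mul t)

lemma int_F0 {p : ℝ} (hp : 2 ≤ p) {v : X → ℝ} (hv : MemLp v (ENNReal.ofReal p) μ) (t : ℝ) :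
    Integrable (F0 p v t) μ := by
  have hpne : ENNReal.ofReal p ≠ 0 := by
    simp only [ne_eq, ENNReal.ofReal_eq_zero, not_le]; linarith
  have h := (memℒp_aff hv t).integrable_norm_rpow hpne ENNReal.ofReal_ne_top
  simp [F0, ENNReal.toReal_ofReal (show (0:ℝ) ≤ p by linarith), Real.norm_eq_abs] at h
  exact h

lemma int_absv {p : ℝ} (hp : 2 ≤ p) {v : X → ℝ} (hv : MemLp v (ENNReal.ofReal p) μ) :
    Integrable (fun x => |v x|) μ := by
  have h : Integrable v μ := hv.integrable (by
    rw [show (1:ℝ≥0∞) = ENNReal.ofReal 1 by simp]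
    exact ENNReal.ofReal_le_ofReal (by linarith))
  exact h.abs

lemma int_vp {p : ℝ} (hp : 2 ≤ p) {v : X → ℝ} (hv : MemLp v (ENNReal.ofReal p) μ) :
    Integrable (fun x => |v x| ^ p) μ := by
  have hpne : ENNReal.ofReal p ≠ 0 := by
    simp only [ne_eq, ENNReal.ofReal_eq_zero, not_le]; linarith
  have h := hv.integrable_norm_rpow hpne ENNReal.ofReal_ne_top
  simpa [ENNReal.toReal_ofReal (show (0:ℝ) ≤ p by linarith), Real.norm_eq_abs] using h

lemma int_vsq {p : ℝ} (hp : 2 ≤ p) {v : X → ℝ} (hv : MemLp v (ENNReal.ofReal p) μ) :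
    Integrable (fun x => v x * v x) μ := by
  have hv2 : MemLp v 2 μ := hv.mono_exponent (by
    rw [show (2:ℝ≥0∞) = ENNReal.ofReal 2 by simp]
    exact ENNReal.ofReal_le_ofReal hp)
  simpa [pow_two] using hv2.integrable_sq

lemma bound_F1 {p : ℝ} (hp : 2 ≤ p) (v : X → ℝ) (t₀ : ℝ) (x : X) :
    ∀ t ∈ Metric.ball t₀ 1, ‖F1 p v t x‖ ≤
      p * 2 ^ (p - 1) * (|v x| + (|t₀| + 1) ^ (p - 1) * |v x| ^ p) := by
  intro t ht
  have hp0 : (0:ℝ) < p := by linarith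
  have hp1 : (0:ℝ) < p - 1 := by linarith
  have htc : |t| ≤ |t₀| + 1 := by
    have hd : |t - t₀| < 1 := by rwa [Metric.mem_ball, Real.dist_eq] at ht
    calc |t| = |t₀ + (t - t₀)| := by ring_nf
      _ ≤ |t₀| + |t - t₀| := abs_add_le _ _
      _ ≤ |t₀| + 1 := by linarith
  set B := 1 + t * v x with hB
  set c := |t₀| + 1 with hc
  have hcnn : (0:ℝ) ≤ c := by positivity
  have hBle : |B| ≤ 1 + c * |v x| := by
    calc |B| ≤ |(1:ℝ)| + |t * v x| := abs_add_le _ _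
      _ = 1 + |t| * |v x| := by rw [abs_one, abs_mul]
      _ ≤ 1 + c * |v x| := by
          have := mul_le_mul_of_nonneg_right htc (abs_nonneg (v x))
          linarith
  have key : |B| ^ (p - 1) ≤ 2 ^ (p - 1) * (1 + c ^ (p - 1) * |v x| ^ (p - 1)) := by
    calc |B| ^ (p - 1) ≤ (1 + c * |v x|) ^ (p - 1) :=
          Real.rpow_le_rpow (abs_nonneg _) hBle hp1.le
      _ ≤ 2 ^ (p - 1) * ((1:ℝ) ^ (p - 1) + (c * |v x|) ^ (p - 1)) :=
          aux_add_rpow_le zero_le_one (by positivity) hp1.le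
      _ = 2 ^ (p - 1) * (1 + c ^ (p - 1) * |v x| ^ (p - 1)) := by
          rw [Real.one_rpow, Real.mul_rpow hcnn (abs_nonneg _)]
  calc ‖F1 p v t x‖ = p * (|B| ^ (p - 2) * |B|) * |v x| := by
        simp only [F1, Real.norm_eq_abs, ← hB, abs_mul]
        rw [abs_of_nonneg hp0.le, abs_of_nonneg (Real.rpow_nonneg (abs_nonneg _) _)]
        ring
    _ = p * |B| ^ (p - 1) * |v x| := by
        rw [show p - 2 = p - 1 - 1 by ring, aux_rpow_mul_self (abs_nonneg B) hp1]
    _ ≤ p * (2 ^ (p - 1) * (1 + c ^ (p - 1) * |v x| ^ (p - 1))) * |v x| := by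
        have h1 := mul_le_mul_of_nonneg_left key hp0.le
        exact mul_le_mul_of_nonneg_right h1 (abs_nonneg _)
    _ = p * 2 ^ (p - 1) * (|v x| + c ^ (p - 1) * (|v x| ^ (p - 1) * |v x|)) := by ring
    _ = p * 2 ^ (p - 1) * (|v x| + c ^ (p - 1) * |v x| ^ p) := by
        rw [show |v x| ^ (p - 1) * |v x| = |v x| ^ p from
          (show p - 1 = p - 1 by rfl) ▸ aux_rpow_mul_self (abs_nonneg _) hp0]

lemma bound_F2 {p : ℝ} (hp : 2 ≤ p) (v : X → ℝ) (t₀ : ℝ) (x : X) :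
    ∀ t ∈ Metric.ball t₀ 1, ‖F2 p v t x‖ ≤
      p * (p - 1) * 2 ^ (p - 2) * (|v x| * |v x| + (|t₀| + 1) ^ (p - 2) * |v x| ^ p) := by
  intro t ht
  have hp0 : (0:ℝ) < p := by linarith
  have hp1 : (0:ℝ) < p - 1 := by linarith
  have hp2 : (0:ℝ) ≤ p - 2 := by linarith
  have htc : |t| ≤ |t₀| + 1 := by
    have hd : |t - t₀| < 1 := by rwa [Metric.mem_ball, Real.dist_eq] at ht
    calc |t| = |t₀ + (t - t₀)| := by ring_nf
      _ ≤ |t₀| + |t - t₀| := abs_add_le _ _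
      _ ≤ |t₀| + 1 := by linarith
  set B := 1 + t * v x with hB
  set c := |t₀| + 1 with hc
  have hcnn : (0:ℝ) ≤ c := by positivity
  have hBle : |B| ≤ 1 + c * |v x| := by
    calc |B| ≤ |(1:ℝ)| + |t * v x| := abs_add_le _ _
      _ = 1 + |t| * |v x| := by rw [abs_one, abs_mul]
      _ ≤ 1 + c * |v x| := by
          have := mul_le_mul_of_nonneg_right htc (abs_nonneg (v x))
          linarith
  have key : |B| ^ (p - 2) ≤ 2 ^ (p - 2) * (1 + c ^ (p - 2) * |v x| ^ (p - 2)) := by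
    calc |B| ^ (p - 2) ≤ (1 + c * |v x|) ^ (p - 2) :=
          Real.rpow_le_rpow (abs_nonneg _) hBle hp2
      _ ≤ 2 ^ (p - 2) * ((1:ℝ) ^ (p - 2) + (c * |v x|) ^ (p - 2)) :=
          aux_add_rpow_le zero_le_one (by positivity) hp2
      _ = 2 ^ (p - 2) * (1 + c ^ (p - 2) * |v x| ^ (p - 2)) := by
          rw [Real.one_rpow, Real.mul_rpow hcnn (abs_nonneg _)]
  have hvp : |v x| ^ (p - 2) * (|v x| * |v x|) = |v x| ^ p := by
    have h1 : |v x| ^ (p - 2) * |v x| = |v x| ^ (p - 1) := by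
      rw [show p - 2 = p - 1 - 1 by ring]
      exact aux_rpow_mul_self (abs_nonneg _) hp1
    have h2 : |v x| ^ (p - 1) * |v x| = |v x| ^ p :=
      aux_rpow_mul_self (abs_nonneg _) hp0
    calc |v x| ^ (p - 2) * (|v x| * |v x|) = (|v x| ^ (p - 2) * |v x|) * |v x| := by ring
      _ = |v x| ^ (p - 1) * |v x| := by rw [h1]
      _ = |v x| ^ p := h2
  calc ‖F2 p v t x‖ = p * (p - 1) * |B| ^ (p - 2) * (|v x| * |v x|) := by
        simp only [F2, Real.norm_eq_abs, ← hB, abs_mul]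
        rw [abs_of_nonneg hp0.le, abs_of_nonneg hp1.le,
          abs_of_nonneg (Real.rpow_nonneg (abs_nonneg _) _)]
    _ ≤ p * (p - 1) * (2 ^ (p - 2) * (1 + c ^ (p - 2) * |v x| ^ (p - 2))) * (|v x| * |v x|) := by
        have h1 := mul_le_mul_of_nonneg_left key (by positivity : (0:ℝ) ≤ p * (p - 1))
        exact mul_le_mul_of_nonneg_right h1 (by positivity)
    _ = p * (p - 1) * 2 ^ (p - 2) * (|v x| * |v x| + c ^ (p - 2) * (|v x| ^ (p - 2) * (|v x| * |v x|))) := by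
        ring
    _ = p * (p - 1) * 2 ^ (p - 2) * (|v x| * |v x| + c ^ (p - 2) * |v x| ^ p) := by rw [hvp]

lemma key1 {p : ℝ} (hp : 2 ≤ p) {v : X → ℝ} (hv : MemLp v (ENNReal.ofReal p) μ) (t₀ : ℝ) :
    Integrable (F1 p v t₀) μ ∧
      HasDerivAt (fun t => ∫ x, F0 p v t x ∂μ) (∫ x, F1 p v t₀ x ∂μ) t₀ := by
  apply hasDerivAt_integral_of_dominated_loc_of_deriv_le
    (bound := fun x => p * 2 ^ (p - 1) * (|v x| + (|t₀| + 1) ^ (p - 1) * |v x| ^ p))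
    (Metric.ball_mem_nhds t₀ one_pos)
  · exact Eventually.of_forall fun t => meas_F0 hp hv.1 t
  · exact int_F0 hp hv t₀
  · exact meas_F1 hp hv.1 t₀
  · exact Eventually.of_forall fun x => bound_F1 hp v t₀ x
  · exact (((int_absv hp hv).add ((int_vp hp hv).const_mul _)).const_mul _)
  · exact Eventually.of_forall fun x t _ => hasDerivAt_F0 hp v x t

lemma key2 {p : ℝ} (hp : 2 ≤ p) {v : X → ℝ} (hv : MemLp v (ENNReal.ofReal p) μ) (t₀ : ℝ) :
    Integrable (F2 p v t₀) μ ∧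
      HasDerivAt (fun t => ∫ x, F1 p v t x ∂μ) (∫ x, F2 p v t₀ x ∂μ) t₀ := by
  apply hasDerivAt_integral_of_dominated_loc_of_deriv_le
    (bound := fun x => p * (p - 1) * 2 ^ (p - 2) * (|v x| * |v x| + (|t₀| + 1) ^ (p - 2) * |v x| ^ p))
    (Metric.ball_mem_nhds t₀ one_pos)
  · exact Eventually.of_forall fun t => meas_F1 hp hv.1 t
  · exact (key1 hp hv t₀).1
  · exact meas_F2 hp hv.1 t₀
  · exact Eventually.of_forall fun x => bound_F2 hp v t₀ x
  · have h1 : Integrable (fun x => |v x| * |v x|) μ := by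
      have := int_vsq hp hv
      apply this.congr
      filter_upwards with x
      rw [abs_mul_abs_self]
    exact ((h1.add ((int_vp hp hv).const_mul _)).const_mul _)
  · exact Eventually.of_forall fun x t _ => hasDerivAt_F1 hp v x t

lemma abs_rpow_two (a : ℝ) : |a| ^ (2:ℝ) = a * a := by
  rw [show (2:ℝ) = ((2:ℕ):ℝ) by norm_num, Real.rpow_natCast, pow_two, abs_mul_abs_self]

lemma psi_pos {p : ℝ} (hp : 2 ≤ p) {v : X → ℝ} (hv : MemLp v (ENNReal.ofReal p) μ)
    (hmean : ∫ x, v x ∂μ = 0) (hm : 0 < (μ Set.univ).toReal) (t : ℝ) :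
    0 < ∫ x, F0 p v t x ∂μ := by
  have hp0 : (0:ℝ) < p := by linarith
  have hnn : 0 ≤ᵐ[μ] F0 p v t :=
    Filter.Eventually.of_forall fun x => Real.rpow_nonneg (abs_nonneg _) _
  have hint := int_F0 hp hv t
  rcases lt_or_eq_of_le (integral_nonneg (f := F0 p v t) fun x => Real.rpow_nonneg (abs_nonneg _) _) with h | h
  · exact h
  · exfalso
    have h0 : F0 p v t =ᵐ[μ] 0 := (integral_eq_zero_iff_of_nonneg_ae hnn hint).1 h.symm
    have h1 : (fun x => 1 + t * v x) =ᵐ[μ] 0 := by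
      filter_upwards [h0] with x hx
      have := (Real.rpow_eq_zero_iff_of_nonneg (abs_nonneg (1 + t * v x))).1 hx
      simpa [abs_eq_zero] using this.1
    have hvi : Integrable v μ := hv.integrable (by
      rw [show (1:ℝ≥0∞) = ENNReal.ofReal 1 by simp]
      exact ENNReal.ofReal_le_ofReal (by linarith))
    have h2 : ∫ x, (1 + t * v x) ∂μ = 0 := by
      rw [integral_congr_ae h1]; simp
    rw [integral_add (integrable_const 1) (hvi.const_mul t), integral_const,
      integral_const_mul, hmean, mul_zero, add_zero, smul_eq_mul, mul_one] at h2
    exact hm.ne' h2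

lemma hoelder_key {p : ℝ} (hp : 2 ≤ p) {v : X → ℝ} (hv : MemLp v (ENNReal.ofReal p) μ) (t : ℝ) :
    ∫ x, |1 + t * v x| ^ (p - 2) * (v x * v x) ∂μ ≤
      (∫ x, F0 p v t x ∂μ) ^ ((p - 2) / p) * (∫ x, |v x| ^ p ∂μ) ^ (2 / p) := by
  have hp0 : (0:ℝ) < p := by linarith
  rcases eq_or_lt_of_le hp with rfl | hp2
  · -- p = 2
    apply le_of_eq
    have h1 : (fun x => |1 + t * v x| ^ ((2:ℝ) - 2) * (v x * v x)) = fun x => v x * v x := by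
      funext x
      norm_num
    have h2 : (fun x => F0 (2:ℝ) v t x) = fun x => |1 + t * v x| ^ (2:ℝ) := rfl
    have h3 : ∫ x, |v x| ^ (2:ℝ) ∂μ = ∫ x, v x * v x ∂μ := by
      congr 1; funext x; exact abs_rpow_two (v x)
    rw [h1, show ((2:ℝ)-2)/2 = 0 by norm_num, Real.rpow_zero, one_mul,
      show (2:ℝ)/2 = 1 by norm_num, Real.rpow_one, h3]
  · -- p > 2
    have hp2' : (0:ℝ) < p - 2 := by linarith
    set r := p / (p - 2) with hr
    set s := p / 2 with hs
    have hconj : Real.HolderConjugate r s := by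
      constructor
      · rw [hr, hs, inv_div, inv_div, ← add_div, inv_one, div_eq_one_iff_eq hp0.ne']; ring
      · exact div_pos hp0 hp2'
      · exact div_pos hp0 two_pos
    have hf : MemLp (fun x => |1 + t * v x| ^ (p - 2)) (ENNReal.ofReal r) μ := by
      have h := (memℒp_aff hv t).norm_rpow_div (ENNReal.ofReal (p - 2))
      rw [ENNReal.toReal_ofReal hp2'.le] at h
      simp only [Real.norm_eq_abs] at h
      rwa [← ENNReal.ofReal_div_of_pos hp2'] at h
    have hg : MemLp (fun x => v x * v x) (ENNReal.ofReal s) μ := by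
      have h := hv.norm_rpow_div (ENNReal.ofReal 2)
      rw [ENNReal.toReal_ofReal (by norm_num : (0:ℝ) ≤ 2)] at h
      simp only [Real.norm_eq_abs] at h
      rw [← ENNReal.ofReal_div_of_pos (by norm_num : (0:ℝ) < 2)] at h
      apply h.ae_eq
      filter_upwards with x
      exact abs_rpow_two (v x)
    have hH := integral_mul_le_Lp_mul_Lq_of_nonneg hconj
      (Filter.Eventually.of_forall fun x => Real.rpow_nonneg (abs_nonneg _) _)
      (Filter.Eventually.of_forall fun x => mul_self_nonneg (v x))
      hf hg
    have e1 : ∫ x, (|1 + t * v x| ^ (p - 2)) ^ r ∂μ = ∫ x, F0 p v t x ∂μ := by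
      congr 1; funext x
      rw [← Real.rpow_mul (abs_nonneg _), show (p - 2) * r = p from by rw [hr]; field_simp]
      rfl
    have e2 : ∫ x, (v x * v x) ^ s ∂μ = ∫ x, |v x| ^ p ∂μ := by
      congr 1; funext x
      rw [← abs_rpow_two (v x), ← Real.rpow_mul (abs_nonneg _)]
      congr 1
      rw [hs]; field_simp
    have e3 : (1:ℝ) / r = (p - 2) / p := by rw [hr, one_div_div]
    have e4 : (1:ℝ) / s = 2 / p := by rw [hs, one_div_div]
    rw [e1, e2, e3, e4] at hH
    exact hH

end main

theorem stmt_2 {X : Type*} [MeasurableSpace X] (μ : Measure X)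
    [IsFiniteMeasure μ] (m₀ : ℝ) (hm₀ : m₀ = (μ Set.univ).toReal)
    (hm₀pos : 0 < m₀) (p : ℝ) (hp : 2 ≤ p) (v : X → ℝ)
    (hv : MemLp v (ENNReal.ofReal p) μ)
    (hmean : ∫ x, v x ∂μ = 0)
    (hne : ¬ (∀ᵐ x ∂μ, v x = 0)) :
    ∃ φ' φ'' : ℝ → ℝ,
      (∀ t : ℝ, HasDerivAt (fun s : ℝ => (∫ x, |1 + s * v x| ^ p ∂μ) ^ (2 / p)) (φ' t) t) ∧
      (∀ t : ℝ, HasDerivAt φ' (φ'' t) t) ∧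
      (∫ x, |1 + (0 : ℝ) * v x| ^ p ∂μ) ^ (2 / p) = m₀ ^ (2 / p) ∧
      φ' 0 = 0 ∧
      (∀ t : ℝ, φ'' t ≤ 2 * (p - 1) * (∫ x, |v x| ^ p ∂μ) ^ (2 / p)) := by
  have hp0 : (0:ℝ) < p := by linarith
  set ψ : ℝ → ℝ := fun t => ∫ x, F0 p v t x ∂μ with hψdef
  set ψ' : ℝ → ℝ := fun t => ∫ x, F1 p v t x ∂μ with hψ'def
  set ψ'' : ℝ → ℝ := fun t => ∫ x, F2 p v t x ∂μ with hψ''def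
  have hψ : ∀ t, HasDerivAt ψ (ψ' t) t := fun t => (key1 hp hv t).2
  have hψ' : ∀ t, HasDerivAt ψ' (ψ'' t) t := fun t => (key2 hp hv t).2
  have hpos : ∀ t, 0 < ψ t := fun t => psi_pos hp hv hmean (hm₀ ▸ hm₀pos) t
  refine ⟨fun t => ψ' t * (2 / p) * ψ t ^ (2 / p - 1),
    fun t => ψ'' t * (2 / p) * ψ t ^ (2 / p - 1) +
      ψ' t * (2 / p) * (ψ' t * (2 / p - 1) * ψ t ^ (2 / p - 1 - 1)),
    ?_, ?_, ?_, ?_, ?_⟩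
  · intro t
    exact (hψ t).rpow_const (Or.inl (hpos t).ne')
  · intro t
    exact ((hψ' t).mul_const (2 / p)).mul ((hψ t).rpow_const (Or.inl (hpos t).ne'))
  · have h0 : ∫ x, |1 + (0:ℝ) * v x| ^ p ∂μ = m₀ := by
      simp [hm₀, measureReal_def]
    rw [h0]
  · have h1 : ψ' 0 = 0 := by
      have h2 : ∫ x, F1 p v 0 x ∂μ = ∫ x, p * v x ∂μ := by
        congr 1; funext x
        simp [F1]
      rw [hψ'def]
      simp only
      rw [h2, integral_const_mul, hmean, mul_zero]
    simp only [h1, zero_mul]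
  · intro t
    set Np := (∫ x, |v x| ^ p ∂μ) ^ (2 / p) with hNp
    set I := ∫ x, |1 + t * v x| ^ (p - 2) * (v x * v x) ∂μ with hI
    have hψ''eq : ψ'' t = p * (p - 1) * I := by
      rw [hψ''def]
      simp only
      rw [show (fun x => F2 p v t x) = fun x => p * (p - 1) * (|1 + t * v x| ^ (p - 2) * (v x * v x)) from by
        funext x; simp only [F2]; ring]
      rw [integral_const_mul]
    have hHold : I ≤ ψ t ^ ((p - 2) / p) * Np := hoelder_key hp hv t
    have hInn : 0 ≤ I := integral_nonneg fun x =>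
      mul_nonneg (Real.rpow_nonneg (abs_nonneg _) _) (mul_self_nonneg _)
    have hE : (0:ℝ) < ψ t ^ (2 / p - 1) := Real.rpow_pos_of_pos (hpos t) _
    have hE2 : (0:ℝ) < ψ t ^ (2 / p - 1 - 1) := Real.rpow_pos_of_pos (hpos t) _
    have hNpnn : 0 ≤ Np := Real.rpow_nonneg (integral_nonneg fun x =>
      Real.rpow_nonneg (abs_nonneg _) _) _
    have hexp : ψ t ^ ((p - 2) / p) * ψ t ^ (2 / p - 1) = 1 := by
      rw [← Real.rpow_add (hpos t)]
      rw [show (p - 2) / p + (2 / p - 1) = 0 from by field_simp; ring]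
      exact Real.rpow_zero _
    have hS2 : ψ' t * (2 / p) * (ψ' t * (2 / p - 1) * ψ t ^ (2 / p - 1 - 1)) ≤ 0 := by
      have h2p : 2 / p - 1 ≤ 0 := by
        have : 2 / p ≤ 1 := by rw [div_le_one hp0]; linarith
        linarith
      have hnn : 0 ≤ ψ' t ^ 2 * (2 / p) * ψ t ^ (2 / p - 1 - 1) := by positivity
      rw [show ψ' t * (2 / p) * (ψ' t * (2 / p - 1) * ψ t ^ (2 / p - 1 - 1)) =
        (2 / p - 1) * (ψ' t ^ 2 * (2 / p) * ψ t ^ (2 / p - 1 - 1)) from by ring]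
      exact mul_nonpos_iff.2 (Or.inr ⟨h2p, hnn⟩)
    have hS1 : ψ'' t * (2 / p) * ψ t ^ (2 / p - 1) ≤ 2 * (p - 1) * Np := by
      rw [hψ''eq]
      rw [show p * (p - 1) * I * (2 / p) * ψ t ^ (2 / p - 1) =
        2 * (p - 1) * (I * ψ t ^ (2 / p - 1)) from by field_simp]
      have step : I * ψ t ^ (2 / p - 1) ≤ Np := by
        calc I * ψ t ^ (2 / p - 1) ≤ (ψ t ^ ((p - 2) / p) * Np) * ψ t ^ (2 / p - 1) :=
              mul_le_mul_of_nonneg_right hHold hE.le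
          _ = Np * (ψ t ^ ((p - 2) / p) * ψ t ^ (2 / p - 1)) := by ring
          _ = Np := by rw [hexp, mul_one]
      have hc : (0:ℝ) ≤ 2 * (p - 1) := by linarith
      exact mul_le_mul_of_nonneg_left step hc
    show ψ'' t * (2 / p) * ψ t ^ (2 / p - 1) +
        ψ' t * (2 / p) * (ψ' t * (2 / p - 1) * ψ t ^ (2 / p - 1 - 1)) ≤ 2 * (p - 1) * Np
    linarith
end

section
/- Let (X, μ) be a measure space with finite total mass m₀ := μ(X) ∈ (0, ∞), let p be real with 1 < p < 2, and let v : X → ℝ be a function in L^p(μ) with ∫_X v dμ = 0. Then ∫_X |1 + v|^p dμ ≤ μ({x : v(x) ≥ −1}) + ∫_X |v|^p dμ + p · μ({x : v(x) < −1})^{(p−1)/p} · (∫_X |v|^p dμ)^{1/p}. -/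
open MeasureTheory Real

private lemma rpow_sub_add {a b q : ℝ} (ha : 0 ≤ a) (hb : 0 ≤ b) (hq0 : 0 ≤ q) (hq1 : q ≤ 1) :
    (a + b) ^ q ≤ a ^ q + b ^ q := by
  have := NNReal.rpow_add_le_add_rpow (a.toNNReal) (b.toNNReal) hq0 hq1
  have h := NNReal.coe_le_coe.2 this
  push_cast at h
  rwa [Real.coe_toNNReal _ ha, Real.coe_toNNReal _ hb] at h

private lemma case_pos {p : ℝ} (hp1 : 1 ≤ p) (hp2 : p ≤ 2) {t : ℝ} (ht : 0 ≤ t) :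
    (1 + t) ^ p ≤ 1 + p * t + t ^ p := by
  set f : ℝ → ℝ := fun t => 1 + p * t + t ^ p - (1 + t) ^ p with hf
  have hp0 : 0 < p := lt_of_lt_of_le one_pos hp1
  have hcont : ContinuousOn f (Set.Ici 0) := by
    apply ContinuousOn.sub
    · exact (continuousOn_const.add (continuousOn_const.mul continuousOn_id)).add
        (fun x hx => (Real.continuousAt_rpow_const x p (Or.inr hp0.le)).continuousWithinAt)
    · exact ContinuousOn.rpow_const (continuousOn_const.add continuousOn_id)
        (fun x _ => Or.inr hp0.le)
  have hderiv : ∀ x ∈ interior (Set.Ici (0:ℝ)), HasDerivAt f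
      (p + p * x ^ (p-1) - p * (1 + x) ^ (p-1)) x := by
    intro x hx
    rw [interior_Ici] at hx
    have hx0 : (0:ℝ) < x := hx
    have h1 : HasDerivAt (fun y : ℝ => y ^ p) (p * x ^ (p-1)) x :=
      Real.hasDerivAt_rpow_const (Or.inl hx0.ne')
    have h2 : HasDerivAt (fun y : ℝ => (1 + y) ^ p) (p * (1 + x) ^ (p-1)) x := by
      have := (Real.hasDerivAt_rpow_const (p := p) (x := 1 + x)
        (Or.inl (by positivity))).comp x ((hasDerivAt_id x).const_add 1)
      exact this.congr_deriv (by ring)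
    have h3 : HasDerivAt (fun y : ℝ => 1 + p * y + y ^ p) (p + p * x ^ (p-1)) x := by
      exact ((((hasDerivAt_id x).const_mul p).const_add 1).add h1).congr_deriv (by ring)
    exact h3.sub h2
  have hmono : MonotoneOn f (Set.Ici 0) := by
    apply monotoneOn_of_deriv_nonneg (convex_Ici 0) hcont
    · intro x hx
      exact (hderiv x hx).differentiableAt.differentiableWithinAt
    · intro x hx
      rw [(hderiv x hx).deriv]
      rw [interior_Ici] at hx
      have hx0 : (0:ℝ) < x := hx
      have key : (1 + x) ^ (p-1) ≤ 1 + x ^ (p-1) := by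
        have := rpow_sub_add (a := 1) (b := x) (q := p - 1) one_pos.le hx0.le
          (by linarith) (by linarith)
        simpa using this
      nlinarith [mul_le_mul_of_nonneg_left key hp0.le]
  have h0 : f 0 = 0 := by
    simp [hf, Real.zero_rpow (by positivity : p ≠ 0), Real.one_rpow]
  have := hmono (Set.self_mem_Ici) ht ht
  rw [h0] at this
  simp only [hf] at this
  linarith

private lemma case_neg {p : ℝ} (hp1 : 1 ≤ p) (hp2 : p ≤ 2) {s : ℝ} (hs0 : 0 ≤ s) (hs1 : s ≤ 1) :
    (1 - s) ^ p ≤ 1 - p * s + s ^ p := by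
  set f : ℝ → ℝ := fun s => 1 - p * s + s ^ p - (1 - s) ^ p with hf
  have hp0 : 0 < p := lt_of_lt_of_le one_pos hp1
  have hcont : ContinuousOn f (Set.Icc 0 1) := by
    apply ContinuousOn.sub
    · exact (continuousOn_const.sub (continuousOn_const.mul continuousOn_id)).add
        (fun x hx => (Real.continuousAt_rpow_const x p (Or.inr hp0.le)).continuousWithinAt)
    · exact ContinuousOn.rpow_const (continuousOn_const.sub continuousOn_id)
        (fun x hx => Or.inr hp0.le)
  have hderiv : ∀ x ∈ interior (Set.Icc (0:ℝ) 1), HasDerivAt f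
      (-p + p * x ^ (p-1) + p * (1 - x) ^ (p-1)) x := by
    intro x hx
    rw [interior_Icc] at hx
    obtain ⟨hx0, hx1⟩ := hx
    have h1 : HasDerivAt (fun y : ℝ => y ^ p) (p * x ^ (p-1)) x :=
      Real.hasDerivAt_rpow_const (Or.inl hx0.ne')
    have h2 : HasDerivAt (fun y : ℝ => (1 - y) ^ p) (-(p * (1 - x) ^ (p-1))) x := by
      have := (Real.hasDerivAt_rpow_const (p := p) (x := 1 - x)
        (Or.inl (ne_of_gt (by linarith)))).comp x ((hasDerivAt_id x).neg.const_add 1)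
      exact this.congr_deriv (by ring)
    have h3 : HasDerivAt (fun y : ℝ => 1 - p * y + y ^ p) (-p + p * x ^ (p-1)) x := by
      have := (((hasDerivAt_id x).const_mul p).neg.const_add 1).add h1
      exact this.congr_deriv (by ring)
    have := h3.sub h2
    exact this.congr_deriv (by ring)
  have hmono : MonotoneOn f (Set.Icc 0 1) := by
    apply monotoneOn_of_deriv_nonneg (convex_Icc 0 1) hcont
    · intro x hx
      exact (hderiv x hx).differentiableAt.differentiableWithinAt
    · intro x hx
      rw [(hderiv x hx).deriv]
      rw [interior_Icc] at hx
      obtain ⟨hx0, hx1⟩ := hx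
      have k1 : x ≤ x ^ (p-1) := by
        calc x = x ^ (1:ℝ) := (Real.rpow_one x).symm
        _ ≤ x ^ (p-1) := Real.rpow_le_rpow_of_exponent_ge hx0 hx1.le (by linarith)
      have k2 : 1 - x ≤ (1 - x) ^ (p-1) := by
        calc 1 - x = (1-x) ^ (1:ℝ) := (Real.rpow_one _).symm
        _ ≤ (1-x) ^ (p-1) := Real.rpow_le_rpow_of_exponent_ge (by linarith) (by linarith)
          (by linarith)
      nlinarith [mul_le_mul_of_nonneg_left (add_le_add k1 k2) hp0.le]
  have h0 : f 0 = 0 := by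
    simp [hf, Real.zero_rpow (by positivity : p ≠ 0), Real.one_rpow]
  have := hmono (Set.left_mem_Icc.2 one_pos.le) (Set.mem_Icc.2 ⟨hs0, hs1⟩) hs0
  rw [h0] at this
  simp only [hf] at this
  linarith

lemma pointwise_key {p : ℝ} (hp1 : 1 ≤ p) (hp2 : p ≤ 2) {t : ℝ} (ht : -1 ≤ t) :
    |1 + t| ^ p ≤ 1 + p * t + |t| ^ p := by
  rcases le_or_gt 0 t with h | h
  · rw [abs_of_nonneg (by linarith), abs_of_nonneg h]
    exact case_pos hp1 hp2 h
  · rw [abs_of_nonneg (by linarith), abs_of_neg h]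
    have := case_neg hp1 hp2 (s := -t) (by linarith) (by linarith)
    calc (1 + t) ^ p = (1 - (-t)) ^ p := by ring_nf
    _ ≤ 1 - p * (-t) + (-t) ^ p := this
    _ = 1 + p * t + (-t) ^ p := by ring

theorem stmt_6 {X : Type*} [MeasurableSpace X] (μ : Measure X)
    [IsFiniteMeasure μ] (m₀ : ℝ) (hm₀ : m₀ = (μ Set.univ).toReal)
    (hm₀pos : 0 < m₀) (p : ℝ) (hp1 : 1 < p) (hp2 : p < 2) (v : X → ℝ)
    (hv : MemLp v (ENNReal.ofReal p) μ)
    (hmean : ∫ x, v x ∂μ = 0) :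
    ∫ x, |1 + v x| ^ p ∂μ ≤
      (μ {x | -1 ≤ v x}).toReal + ∫ x, |v x| ^ p ∂μ +
        p * (μ {x | v x < -1}).toReal ^ ((p - 1) / p) *
          (∫ x, |v x| ^ p ∂μ) ^ (1 / p) := by
  have hp0 : (0:ℝ) < p := by linarith
  set P := ENNReal.ofReal p with hP
  have hP0 : P ≠ 0 := by
    simp [hP, ENNReal.ofReal_eq_zero, not_le, hp0]
  have hP_top : P ≠ ⊤ := ENNReal.ofReal_ne_top
  have hP1 : 1 ≤ P := by
    rw [hP, ← ENNReal.ofReal_one]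
    exact ENNReal.ofReal_le_ofReal hp1.le
  -- measurable representative
  set g : X → ℝ := hv.1.mk v with hgdef
  have hgsm : StronglyMeasurable g := hv.1.stronglyMeasurable_mk
  have hvg : v =ᵐ[μ] g := hv.1.ae_eq_mk
  have hg_mem : MemLp g P μ := hv.ae_eq hvg
  set A : Set X := {x | -1 ≤ g x} with hAdef
  have hA : MeasurableSet A := hgsm.measurable measurableSet_Ici
  have hBc : {x | g x < -1} = Aᶜ := by
    ext x; simp [hAdef, not_le]
  -- transfer everything to g
  have hI1 : ∫ x, |1 + v x| ^ p ∂μ = ∫ x, |1 + g x| ^ p ∂μ :=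
    integral_congr_ae (hvg.mono fun x hx => by dsimp only; rw [hx])
  have hIv : ∫ x, |v x| ^ p ∂μ = ∫ x, |g x| ^ p ∂μ :=
    integral_congr_ae (hvg.mono fun x hx => by dsimp only; rw [hx])
  have hμA : μ {x | -1 ≤ v x} = μ A :=
    measure_congr (hvg.mono fun x hx => by
      change (-1 ≤ v x) = (-1 ≤ g x); rw [hx])
  have hμB : μ {x | v x < -1} = μ Aᶜ := by
    rw [← hBc]
    exact measure_congr (hvg.mono fun x hx => by
      change (v x < -1) = (g x < -1); rw [hx])
  have hg0 : ∫ x, g x ∂μ = 0 := by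
    rw [← integral_congr_ae hvg]; exact hmean
  -- integrability facts
  have hgint : Integrable g μ := hg_mem.integrable hP1
  have hint1 : Integrable (fun x => |1 + g x| ^ p) μ := by
    have hm : MemLp (fun x => 1 + g x) P μ := (memLp_const (1:ℝ)).add hg_mem
    have := hm.integrable_norm_rpow hP0 hP_top
    simpa [hP, Real.norm_eq_abs, ENNReal.toReal_ofReal hp0.le] using this
  have hint2 : Integrable (fun x => |g x| ^ p) μ := by
    have := hg_mem.integrable_norm_rpow hP0 hP_top
    simpa [hP, Real.norm_eq_abs, ENNReal.toReal_ofReal hp0.le] using this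
  have hindint : Integrable (A.indicator (fun x => 1 + p * g x)) μ :=
    ((integrable_const 1).add (hgint.const_mul p)).indicator hA
  -- pointwise bound
  have hpt : ∀ x, |1 + g x| ^ p ≤ A.indicator (fun x => 1 + p * g x) x + |g x| ^ p := by
    intro x
    by_cases hx : x ∈ A
    · rw [Set.indicator_of_mem hx]
      exact pointwise_key hp1.le hp2.le hx
    · rw [Set.indicator_of_notMem hx, zero_add]
      have hx' : g x < -1 := not_le.1 hx
      have h1 : |1 + g x| ≤ |g x| := by
        rw [abs_of_neg (by linarith : 1 + g x < 0), abs_of_neg (by linarith : g x < 0)]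
        linarith
      exact Real.rpow_le_rpow (abs_nonneg _) h1 hp0.le
  have step1 : ∫ x, |1 + g x| ^ p ∂μ ≤
      ∫ x, (A.indicator (fun x => 1 + p * g x) x + |g x| ^ p) ∂μ :=
    integral_mono hint1 (hindint.add hint2) hpt
  have step2 : ∫ x, (A.indicator (fun x => 1 + p * g x) x + |g x| ^ p) ∂μ
      = (μ A).toReal + p * ∫ x in A, g x ∂μ + ∫ x, |g x| ^ p ∂μ := by
    rw [integral_add hindint hint2, integral_indicator hA]
    have : ∫ x in A, (1 + p * g x) ∂μ = (μ A).toReal + p * ∫ x in A, g x ∂μ := by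
      rw [integral_add (integrable_const 1) ((hgint.const_mul p).integrableOn),
        integral_const_mul]
      simp [Measure.restrict_apply_univ, Measure.real]
    rw [this]
  have step3 : ∫ x in A, g x ∂μ = ∫ x in Aᶜ, |g x| ∂μ := by
    have hcompl := integral_add_compl hA hgint
    rw [hg0] at hcompl
    have h1 : ∫ x in Aᶜ, |g x| ∂μ = ∫ x in Aᶜ, (-g x) ∂μ := by
      apply setIntegral_congr_fun hA.compl
      intro x hx
      have : g x < -1 := by simpa [hAdef, not_le] using hx
      simp [abs_of_neg (by linarith : g x < 0)]
    rw [h1, integral_neg]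
    linarith
  -- Hölder
  have hpq : p.HolderConjugate (p / (p - 1)) := Real.HolderConjugate.conjExponent hp1
  have hHolder : ∫ x in Aᶜ, |g x| ∂μ ≤
      (μ Aᶜ).toReal ^ ((p - 1) / p) * (∫ x, |g x| ^ p ∂μ) ^ (1 / p) := by
    have hf_mem : MemLp (fun x => |g x|) P (μ.restrict Aᶜ) := by
      simpa [Real.norm_eq_abs] using (hg_mem.restrict Aᶜ).norm
    have hg1 : MemLp (fun _ : X => (1:ℝ)) (ENNReal.ofReal (p / (p - 1))) (μ.restrict Aᶜ) :=
      memLp_const 1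
    have hH := integral_mul_le_Lp_mul_Lq_of_nonneg hpq
      (Filter.Eventually.of_forall fun x => abs_nonneg (g x))
      (Filter.Eventually.of_forall fun _ => zero_le_one) hf_mem hg1
    simp only [mul_one, Real.one_rpow] at hH
    have hconst : ∫ _ in Aᶜ, (1:ℝ) ∂μ = (μ Aᶜ).toReal := by
      simp [Measure.restrict_apply_univ, Measure.real]
    rw [hconst, one_div_div] at hH
    calc ∫ x in Aᶜ, |g x| ∂μ
        ≤ (∫ x in Aᶜ, |g x| ^ p ∂μ) ^ (1 / p) * (μ Aᶜ).toReal ^ ((p - 1) / p) := hH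
      _ ≤ (∫ x, |g x| ^ p ∂μ) ^ (1 / p) * (μ Aᶜ).toReal ^ ((p - 1) / p) := by
          apply mul_le_mul_of_nonneg_right _ (Real.rpow_nonneg ENNReal.toReal_nonneg _)
          apply Real.rpow_le_rpow (integral_nonneg fun x => Real.rpow_nonneg (abs_nonneg _) p)
          · exact setIntegral_le_integral hint2
              (Filter.Eventually.of_forall fun x => Real.rpow_nonneg (abs_nonneg _) p)
          · positivity
      _ = (μ Aᶜ).toReal ^ ((p - 1) / p) * (∫ x, |g x| ^ p ∂μ) ^ (1 / p) := mul_comm _ _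
  -- assemble
  rw [hI1, hIv, hμA, hμB]
  have nonnegp : (0:ℝ) ≤ p := hp0.le
  calc ∫ x, |1 + g x| ^ p ∂μ
      ≤ (μ A).toReal + p * ∫ x in A, g x ∂μ + ∫ x, |g x| ^ p ∂μ := step1.trans_eq step2
    _ = (μ A).toReal + p * ∫ x in Aᶜ, |g x| ∂μ + ∫ x, |g x| ^ p ∂μ := by rw [step3]
    _ ≤ (μ A).toReal + p * ((μ Aᶜ).toReal ^ ((p - 1) / p) * (∫ x, |g x| ^ p ∂μ) ^ (1 / p))
          + ∫ x, |g x| ^ p ∂μ := by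
        have := mul_le_mul_of_nonneg_left hHolder nonnegp
        linarith
    _ = (μ A).toReal + ∫ x, |g x| ^ p ∂μ
          + p * (μ Aᶜ).toReal ^ ((p - 1) / p) * (∫ x, |g x| ^ p ∂μ) ^ (1 / p) := by ring
end

section
/- Let (X, μ) be a measure space with finite total mass m₀ := μ(X) ∈ (0, ∞), let p be real with 1 < p < 2, and let v : X → ℝ be a function in L^p(μ) with ∫_X v dμ = 0. If m₀^{1/p} < (p−1) (∫_X |v|^p dμ)^{1/p}, then ∫_X |1 + v|^p dμ ≤ (1 + p (p−1)^{p−1}) ∫_X |v|^p dμ. -/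
open MeasureTheory Real
open scoped NNReal

/-- Subadditivity of `x ↦ x ^ p` for `0 ≤ p ≤ 1` on nonnegative reals. -/
lemma stmt9_rpow_add_le {a b p : ℝ} (ha : 0 ≤ a) (hb : 0 ≤ b) (hp : 0 ≤ p) (hp1 : p ≤ 1) :
    (a + b) ^ p ≤ a ^ p + b ^ p := by
  have h := NNReal.rpow_add_le_add_rpow (⟨a, ha⟩ : ℝ≥0) (⟨b, hb⟩ : ℝ≥0) hp hp1
  have h' := NNReal.coe_le_coe.mpr h
  exact h'

/-- Young-type inequality: `p * s ≤ 1 + (p-1)^(p-1) * s ^ p` for `s ≥ 0`, `1 < p`. -/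
lemma stmt9_young {p : ℝ} (hp1 : 1 < p) (s : ℝ) (hs : 0 ≤ s) :
    p * s ≤ 1 + (p - 1) ^ (p - 1) * s ^ p := by
  set q : ℝ := p - 1 with hq
  have hq0 : 0 < q := by simp [hq]; linarith
  have hp0 : 0 < p := by linarith
  have hconj : p.HolderConjugate (p / (p - 1)) := Real.HolderConjugate.conjExponent hp1
  set lam : ℝ := q ^ (q / p) with hlam
  have hlam0 : 0 < lam := Real.rpow_pos_of_pos hq0 _
  have h := Real.young_inequality_of_nonneg
    (mul_nonneg hlam0.le hs) (le_of_lt (inv_pos.mpr hlam0)) hconj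
  -- (lam * s) * lam⁻¹ ≤ (lam*s)^p / p + (lam⁻¹)^(p/(p-1)) / (p/(p-1))
  have hab : lam * s * lam⁻¹ = s := by field_simp
  have h1 : (lam * s) ^ p = q ^ q * s ^ p := by
    rw [Real.mul_rpow hlam0.le hs, hlam, ← Real.rpow_mul hq0.le,
      div_mul_cancel₀ _ (by linarith : p ≠ 0)]
  have h2 : (lam⁻¹) ^ (p / (p - 1)) = q⁻¹ := by
    rw [hlam, ← Real.rpow_neg_one (q ^ (q / p)), ← Real.rpow_mul hq0.le,
      ← Real.rpow_mul hq0.le]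
    rw [show q / p * -1 * (p / (p - 1)) = -1 by rw [hq]; field_simp [ne_of_gt (sub_pos.mpr hp1)]]
    exact Real.rpow_neg_one q
  rw [hab, h1, h2] at h
  have h3 : q⁻¹ / (p / (p - 1)) = 1 / p := by
    rw [hq]; field_simp [ne_of_gt (sub_pos.mpr hp1)]
  rw [h3] at h
  have : p * s ≤ p * (q ^ q * s ^ p / p + 1 / p) := by
    exact mul_le_mul_of_nonneg_left h hp0.le
  calc p * s ≤ p * (q ^ q * s ^ p / p + 1 / p) := this
    _ = 1 + q ^ q * s ^ p := by field_simp; ring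
    _ = 1 + (p - 1) ^ (p - 1) * s ^ p := by rw [hq]

/-- `(1+t)^p ≤ 1 + p t + t^p` for `t ≥ 0`, `1 < p ≤ 2`. -/
lemma stmt9_aux1 {p : ℝ} (hp1 : 1 < p) (hp2 : p ≤ 2) {t : ℝ} (ht : 0 ≤ t) :
    (1 + t) ^ p ≤ 1 + p * t + t ^ p := by
  set f : ℝ → ℝ := fun t => 1 + p * t + t ^ p - (1 + t) ^ p with hf
  have hderiv : ∀ x : ℝ, HasDerivAt f (p + p * x ^ (p - 1) - p * (1 + x) ^ (p - 1) * 1) x := by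
    intro x
    have h1 : HasDerivAt (fun x : ℝ => x ^ p) (p * x ^ (p - 1)) x :=
      Real.hasDerivAt_rpow_const (Or.inr hp1.le)
    have h2 : HasDerivAt (fun x : ℝ => (1 + x) ^ p) (p * (1 + x) ^ (p - 1) * 1) x := by
      have hin : HasDerivAt (fun x : ℝ => 1 + x) 1 x := (hasDerivAt_id x).const_add 1
      exact (Real.hasDerivAt_rpow_const (x := 1 + x) (Or.inr hp1.le)).comp x hin
    have h3 : HasDerivAt (fun x : ℝ => 1 + p * x) (0 + p * 1) x :=
      (hasDerivAt_const x 1).add ((hasDerivAt_id x).const_mul p)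
    have := (h3.add h1).sub h2
    exact this.congr_deriv (by ring)
  have hdiff : Differentiable ℝ f := fun x => (hderiv x).differentiableAt
  have hmono : MonotoneOn f (Set.Ici (0 : ℝ)) := by
    apply monotoneOn_of_deriv_nonneg (convex_Ici 0) hdiff.continuous.continuousOn
      (hdiff.differentiableOn)
    intro x hx
    rw [interior_Ici] at hx
    have hx0 : 0 < x := hx
    rw [(hderiv x).deriv]
    have hsub : (1 + x) ^ (p - 1) ≤ 1 + x ^ (p - 1) := by
      have h := stmt9_rpow_add_le (zero_le_one) hx0.le
        (by linarith : (0:ℝ) ≤ p - 1) (by linarith : p - 1 ≤ 1)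
      simpa [Real.one_rpow] using h
    nlinarith [hsub]
  have h0 : f 0 ≤ f t := hmono (Set.mem_Ici.mpr le_rfl) (Set.mem_Ici.mpr ht) ht
  have hf0 : f 0 = 0 := by
    simp [hf, Real.zero_rpow (by linarith : p ≠ 0), Real.one_rpow]
  rw [hf0] at h0
  simp only [hf] at h0
  linarith


/-- `(1-s)^p ≤ 1 - p s + s^p` for `s ∈ [0,1]`, `1 < p ≤ 2`. -/
lemma stmt9_aux2 {p : ℝ} (hp1 : 1 < p) (hp2 : p ≤ 2) {s : ℝ} (hs0 : 0 ≤ s) (hs1 : s ≤ 1) :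
    (1 - s) ^ p ≤ 1 - p * s + s ^ p := by
  set g : ℝ → ℝ := fun s => 1 - p * s + s ^ p - (1 - s) ^ p with hg
  have hderiv : ∀ x : ℝ, HasDerivAt g (0 - p * 1 + p * x ^ (p - 1)
      - p * (1 - x) ^ (p - 1) * (-1)) x := by
    intro x
    have h1 : HasDerivAt (fun x : ℝ => x ^ p) (p * x ^ (p - 1)) x :=
      Real.hasDerivAt_rpow_const (Or.inr hp1.le)
    have hin : HasDerivAt (fun x : ℝ => 1 - x) (-1) x := (hasDerivAt_id x).const_sub 1
    have h2 : HasDerivAt (fun x : ℝ => (1 - x) ^ p) (p * (1 - x) ^ (p - 1) * (-1)) x :=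
      (Real.hasDerivAt_rpow_const (x := 1 - x) (Or.inr hp1.le)).comp x hin
    have h3 : HasDerivAt (fun x : ℝ => 1 - p * x) (0 - p * 1) x :=
      (hasDerivAt_const x 1).sub ((hasDerivAt_id x).const_mul p)
    exact (h3.add h1).sub h2
  have hdiff : Differentiable ℝ g := fun x => (hderiv x).differentiableAt
  have hmono : MonotoneOn g (Set.Icc (0 : ℝ) 1) := by
    apply monotoneOn_of_deriv_nonneg (convex_Icc 0 1) hdiff.continuous.continuousOn
      hdiff.differentiableOn
    intro x hx
    rw [interior_Icc] at hx
    obtain ⟨hx0, hx1⟩ := hx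
    rw [(hderiv x).deriv]
    have hsub : 1 ≤ x ^ (p - 1) + (1 - x) ^ (p - 1) := by
      have h := stmt9_rpow_add_le hx0.le (by linarith : (0:ℝ) ≤ 1 - x)
        (by linarith : (0:ℝ) ≤ p - 1) (by linarith : p - 1 ≤ 1)
      have hx' : x + (1 - x) = 1 := by ring
      rw [hx', Real.one_rpow] at h
      exact h
    nlinarith [hsub]
  have h0 : g 0 ≤ g s := hmono (Set.mem_Icc.mpr ⟨le_rfl, zero_le_one⟩)
    (Set.mem_Icc.mpr ⟨hs0, hs1⟩) hs0
  have hg0 : g 0 = 0 := by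
    simp [hg, Real.zero_rpow (by linarith : p ≠ 0), Real.one_rpow]
  rw [hg0] at h0
  simp only [hg] at h0
  linarith

/-- The key pointwise inequality. -/
lemma stmt9_key {p : ℝ} (hp1 : 1 < p) (hp2 : p < 2) (t : ℝ) :
    |1 + t| ^ p ≤ 1 + p * t + (1 + (p - 1) ^ (p - 1)) * |t| ^ p := by
  have hqq : 0 ≤ (p - 1) ^ (p - 1) := Real.rpow_nonneg (by linarith) _
  rcases le_or_gt 0 t with ht | ht
  · rw [abs_of_nonneg (by linarith : (0:ℝ) ≤ 1 + t), abs_of_nonneg ht]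
    have h1 := stmt9_aux1 hp1 hp2.le ht
    have h2 : 0 ≤ t ^ p := Real.rpow_nonneg ht _
    nlinarith
  rcases le_or_gt (-1) t with ht1 | ht1
  · -- -1 ≤ t < 0
    rw [abs_of_nonneg (by linarith : (0:ℝ) ≤ 1 + t), abs_of_neg ht]
    have h1 := stmt9_aux2 hp1 hp2.le (by linarith : (0:ℝ) ≤ -t) (by linarith : -t ≤ 1)
    have h2 : 0 ≤ (-t) ^ p := Real.rpow_nonneg (by linarith) _
    have : (1 : ℝ) - -t = 1 + t := by ring
    rw [this] at h1
    nlinarith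
  · -- t < -1
    rw [abs_of_neg (by linarith : 1 + t < 0), abs_of_neg (by linarith : t < 0)]
    have hs1 : (1:ℝ) ≤ -t := by linarith
    have h1 : (-(1 + t)) ^ p ≤ (-t) ^ p :=
      Real.rpow_le_rpow (by linarith) (by linarith) (by linarith)
    have h2 := stmt9_young hp1 (-t) (by linarith)
    have h3 : 0 ≤ (-t) ^ p := Real.rpow_nonneg (by linarith) _
    nlinarith

theorem stmt_9 {X : Type*} [MeasurableSpace X] (μ : Measure X)
    [IsFiniteMeasure μ] (m₀ : ℝ) (hm₀ : m₀ = (μ Set.univ).toReal)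
    (hm₀pos : 0 < m₀) (p : ℝ) (hp1 : 1 < p) (hp2 : p < 2) (v : X → ℝ)
    (hv : MemLp v (ENNReal.ofReal p) μ)
    (hmean : ∫ x, v x ∂μ = 0)
    (hcase : m₀ ^ (1 / p) < (p - 1) * (∫ x, |v x| ^ p ∂μ) ^ (1 / p)) :
    ∫ x, |1 + v x| ^ p ∂μ ≤
      (1 + p * (p - 1) ^ (p - 1)) * ∫ x, |v x| ^ p ∂μ := by
  have hp0 : (0:ℝ) < p := by linarith
  set c : ℝ := 1 + (p - 1) ^ (p - 1) with hc
  set I : ℝ := ∫ x, |v x| ^ p ∂μ with hI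
  have hI0 : 0 ≤ I := integral_nonneg fun x => Real.rpow_nonneg (abs_nonneg _) p
  -- from hcase : m₀ ≤ (p-1)^p * I
  have hm : m₀ ≤ (p - 1) ^ p * I := by
    have h1 : (m₀ ^ (1 / p)) ^ p ≤ ((p - 1) * I ^ (1 / p)) ^ p :=
      Real.rpow_le_rpow (Real.rpow_nonneg hm₀pos.le _) hcase.le hp0.le
    rw [← Real.rpow_mul hm₀pos.le,
      Real.mul_rpow (by linarith) (Real.rpow_nonneg hI0 _), ← Real.rpow_mul hI0] at h1
    simp only [one_div, inv_mul_cancel₀ hp0.ne', Real.rpow_one] at h1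
    exact h1
  -- integrability
  have hvint : Integrable v μ := hv.integrable (by
    rw [← ENNReal.ofReal_one]
    exact ENNReal.ofReal_le_ofReal hp1.le)
  have habs : Integrable (fun x => |v x| ^ p) μ := by
    have h := hv.integrable_norm_rpow (by simp [hp0, hp0.ne']) (by simp)
    simpa [Real.norm_eq_abs, ENNReal.toReal_ofReal hp0.le] using h
  have hg : Integrable (fun x => 1 + p * v x + c * |v x| ^ p) μ :=
    ((integrable_const 1).add (hvint.const_mul p)).add (habs.const_mul c)
  have hmono : ∫ x, |1 + v x| ^ p ∂μ ≤ ∫ x, (1 + p * v x + c * |v x| ^ p) ∂μ := by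
    apply integral_mono_of_nonneg
    · exact Filter.Eventually.of_forall fun x => Real.rpow_nonneg (abs_nonneg _) _
    · exact hg
    · exact Filter.Eventually.of_forall fun x => stmt9_key hp1 hp2 (v x)
  have hcalc : ∫ x, (1 + p * v x + c * |v x| ^ p) ∂μ = m₀ + c * I := by
    have hf1 : Integrable (fun x => 1 + p * v x) μ := (integrable_const 1).add (hvint.const_mul p)
    have hf2 : Integrable (fun x => p * v x) μ := hvint.const_mul p
    rw [integral_add hf1 (habs.const_mul c),
      integral_add (integrable_const 1) hf2,
      integral_const, integral_const_mul, integral_const_mul, hmean, hI]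
    simp [hm₀, mul_comm, Measure.real]
  rw [hcalc] at hmono
  have hfin : m₀ + c * I ≤ (1 + p * (p - 1) ^ (p - 1)) * I := by
    have hsplit : (p - 1) ^ p = (p - 1) ^ (p - 1) * (p - 1) := by
      have h := Real.rpow_add (show (0:ℝ) < p - 1 by linarith) (p - 1) 1
      rw [Real.rpow_one] at h
      rw [show p - 1 + 1 = p by ring] at h
      exact h
    have : (p - 1) ^ p * I + c * I = (1 + p * (p - 1) ^ (p - 1)) * I := by
      rw [hsplit, hc]; ring
    linarith
  exact hmono.trans hfin
end

section
/- Let (X, μ) be a measure space with finite total mass m₀ := μ(X) ∈ (0, ∞), let p be real with 1 < p < 2, and let v : X → ℝ be a function in L^p(μ) with ∫_X v dμ = 0. If m₀^{1/p} ≥ (p−1) (∫_X |v|^p dμ)^{1/p}, then ∫_X |1 + v|^p dμ ≤ m₀ + (1 + p (p−1)^{p−1}) ∫_X |v|^p dμ. -/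
open MeasureTheory Real

lemma young_aux {p : ℝ} (hp1 : 1 < p) (s : ℝ) (hs : 0 ≤ s) :
    p * s ≤ 1 + p * (p - 1) ^ (p - 1) * s ^ p := by
  set δ : ℝ := p * (p - 1) ^ (p - 1) with hδ
  have hp0 : (0:ℝ) < p := lt_trans one_pos hp1
  have hpm1 : (0:ℝ) < p - 1 := by linarith
  have hδpos : 0 < δ := mul_pos hp0 (rpow_pos_of_pos hpm1 _)
  have hq := Real.HolderConjugate.conjExponent hp1
  have key := Real.young_inequality_of_nonneg
    (a := δ ^ (1/p) * s) (b := δ ^ (-(1/p)))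
    (mul_nonneg (rpow_nonneg hδpos.le _) hs) (rpow_nonneg hδpos.le _) hq
  have hab : δ ^ (1/p) * s * δ ^ (-(1/p)) = s := by
    rw [mul_comm (δ ^ (1/p)) s, mul_assoc, ← Real.rpow_add hδpos]
    simp
  have ha : (δ ^ (1/p) * s) ^ p = δ * s ^ p := by
    rw [Real.mul_rpow (rpow_nonneg hδpos.le _) hs, ← Real.rpow_mul hδpos.le,
      one_div, inv_mul_cancel₀ hp0.ne', Real.rpow_one]
  have hb : (δ ^ (-(1/p))) ^ Real.conjExponent p = δ ^ (-(1/(p-1))) := by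
    rw [← Real.rpow_mul hδpos.le]
    congr 1
    rw [Real.conjExponent]
    field_simp
  rw [hab, ha, hb] at key
  -- key : s ≤ δ * s ^ p / p + δ ^ (-(1/(p-1))) / conjExponent p
  have hδval : δ ^ (-(1/(p-1))) = p ^ (-(1/(p-1))) * (p-1)⁻¹ := by
    rw [hδ, Real.mul_rpow hp0.le (rpow_nonneg hpm1.le _), ← Real.rpow_mul hpm1.le]
    rw [mul_neg, mul_one_div, div_self hpm1.ne', Real.rpow_neg_one]
  have hconj : Real.conjExponent p = p / (p - 1) := rfl
  have hple : p ^ (-(1/(p-1))) ≤ 1 :=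
    Real.rpow_le_one_of_one_le_of_nonpos hp1.le (neg_nonpos.mpr (by positivity))
  have key2 : p * s ≤ δ * s ^ p + p ^ (-(1/(p-1))) := by
    have := mul_le_mul_of_nonneg_left key hp0.le
    rw [mul_add] at this
    calc p * s ≤ p * (δ * s ^ p / p) + p * (δ ^ (-(1/(p-1))) / Real.conjExponent p) := this
      _ = δ * s ^ p + p ^ (-(1/(p-1))) := by
          rw [mul_div_cancel₀ _ hp0.ne', hδval, hconj]
          field_simp
  linarith

lemma rpow_sum_le {x y q : ℝ} (hx : 0 ≤ x) (hy : 0 ≤ y) (hq0 : 0 ≤ q) (hq1 : q ≤ 1) :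
    (x + y) ^ q ≤ x ^ q + y ^ q := by
  have h := NNReal.rpow_add_le_add_rpow x.toNNReal y.toNNReal hq0 hq1
  have h2 := NNReal.coe_le_coe.2 h
  push_cast [NNReal.coe_rpow, Real.coe_toNNReal x hx, Real.coe_toNNReal y hy] at h2
  simpa [Real.coe_toNNReal x hx, Real.coe_toNNReal y hy] using h2

lemma caseC {p : ℝ} (hp1 : 1 < p) (hp2 : p < 2) {t : ℝ} (ht : 0 ≤ t) :
    (1 + t) ^ p ≤ 1 + p * t + t ^ p := by
  have hp0 : (0:ℝ) < p := lt_trans one_pos hp1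
  set f : ℝ → ℝ := fun t => 1 + p * t + t ^ p - (1 + t) ^ p with hf
  have hderiv : ∀ s : ℝ, HasDerivAt f (p + p * s ^ (p-1) - p * (1+s) ^ (p-1)) s := by
    intro s
    have h1 : HasDerivAt (fun x : ℝ => x ^ p) (p * s ^ (p-1)) s :=
      Real.hasDerivAt_rpow_const (Or.inr hp1.le)
    have h2 : HasDerivAt (fun x : ℝ => (1 + x) ^ p) (p * (1+s) ^ (p-1) * 1) s :=
      (Real.hasDerivAt_rpow_const (x := 1 + s) (Or.inr hp1.le)).comp s
        ((hasDerivAt_id s).const_add 1)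
    have h3 : HasDerivAt (fun x : ℝ => 1 + p * x) (p) s := by
      simpa using ((hasDerivAt_id s).const_mul p).const_add 1
    have h := (h3.add h1).sub h2
    rw [mul_one] at h
    exact h
  have hmono : MonotoneOn f (Set.Ici (0:ℝ)) := by
    apply monotoneOn_of_deriv_nonneg (convex_Ici 0)
    · exact fun s _ => ((hderiv s).continuousAt).continuousWithinAt
    · exact fun s _ => ((hderiv s).differentiableAt).differentiableWithinAt
    · intro s hs
      rw [interior_Ici] at hs
      rw [(hderiv s).deriv]
      have hs' : (0:ℝ) < s := hs
      have hsub : (1 + s) ^ (p-1) ≤ 1 + s ^ (p-1) := by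
        have := rpow_sum_le (x := 1) (y := s) (q := p - 1) zero_le_one hs'.le
          (by linarith) (by linarith)
        simpa using this
      nlinarith [Real.rpow_nonneg hs'.le (p-1)]
  have h0 : f 0 ≤ f t := hmono (le_refl (0:ℝ)) ht ht
  simp only [hf, Real.zero_rpow hp0.ne', mul_zero, add_zero, Real.one_rpow] at h0
  linarith

lemma caseB {p : ℝ} (hp1 : 1 < p) (hp2 : p < 2) {C : ℝ} (hC : 1 ≤ C)
    {t : ℝ} (ht1 : -1 ≤ t) (ht0 : t ≤ 0) :
    (1 + t) ^ p ≤ 1 + p * t + C * (-t) ^ p := by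
  have hp0 : (0:ℝ) < p := lt_trans one_pos hp1
  set g : ℝ → ℝ := fun t => 1 + p * t + C * (-t) ^ p - (1 + t) ^ p with hg
  have hderiv : ∀ s : ℝ, HasDerivAt g
      (p + C * (p * (-s) ^ (p-1) * (-1)) - p * (1+s) ^ (p-1) * 1) s := by
    intro s
    have h1 : HasDerivAt (fun x : ℝ => (-x) ^ p) (p * (-s) ^ (p-1) * (-1)) s :=
      (Real.hasDerivAt_rpow_const (x := -s) (Or.inr hp1.le)).comp s (hasDerivAt_neg s)
    have h2 : HasDerivAt (fun x : ℝ => (1 + x) ^ p) (p * (1+s) ^ (p-1) * 1) s :=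
      (Real.hasDerivAt_rpow_const (x := 1 + s) (Or.inr hp1.le)).comp s
        ((hasDerivAt_id s).const_add 1)
    have h3 : HasDerivAt (fun x : ℝ => 1 + p * x) (p) s := by
      simpa using ((hasDerivAt_id s).const_mul p).const_add 1
    exact (h3.add (h1.const_mul C)).sub h2
  have hanti : AntitoneOn g (Set.Icc (-1:ℝ) 0) := by
    apply antitoneOn_of_deriv_nonpos (convex_Icc _ _)
    · exact fun s _ => ((hderiv s).continuousAt).continuousWithinAt
    · exact fun s _ => ((hderiv s).differentiableAt).differentiableWithinAt
    · intro s hs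
      rw [interior_Icc] at hs
      obtain ⟨hs1, hs0⟩ := hs
      rw [(hderiv s).deriv]
      have ha1 : -s ≤ (-s) ^ (p-1) := by
        have h := Real.rpow_le_rpow_of_exponent_ge (x := -s) (y := 1) (z := p - 1)
          (by linarith) (by linarith) (by linarith)
        rwa [Real.rpow_one] at h
      have ha2 : 1 + s ≤ (1+s) ^ (p-1) := by
        have h := Real.rpow_le_rpow_of_exponent_ge (x := 1 + s) (y := 1) (z := p - 1)
          (by linarith) (by linarith) (by linarith)
        rwa [Real.rpow_one] at h
      have hC' : (-s) ^ (p-1) ≤ C * (-s) ^ (p-1) := by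
        nlinarith [Real.rpow_nonneg (show (0:ℝ) ≤ -s by linarith) (p-1)]
      nlinarith
  have h0 : g 0 ≤ g t := hanti (Set.mem_Icc.2 ⟨ht1, ht0⟩) (Set.mem_Icc.2 ⟨by norm_num, le_refl 0⟩) ht0
  simp only [hg, neg_zero, Real.zero_rpow hp0.ne', mul_zero, add_zero, Real.one_rpow] at h0
  linarith

lemma pointwise_ineq {p : ℝ} (hp1 : 1 < p) (hp2 : p < 2) (t : ℝ) :
    |1 + t| ^ p ≤ 1 + p * t + (1 + p * (p - 1) ^ (p - 1)) * |t| ^ p := by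
  have hp0 : (0:ℝ) < p := lt_trans one_pos hp1
  have hδ : (0:ℝ) ≤ p * (p - 1) ^ (p - 1) :=
    mul_nonneg hp0.le (Real.rpow_nonneg (by linarith) _)
  have hC : (1:ℝ) ≤ 1 + p * (p - 1) ^ (p - 1) := by linarith
  rcases le_or_gt 0 t with ht | ht
  · rw [abs_of_nonneg (by linarith : (0:ℝ) ≤ 1 + t), abs_of_nonneg ht]
    have h := caseC hp1 hp2 ht
    have : t ^ p ≤ (1 + p * (p - 1) ^ (p - 1)) * t ^ p := by
      nlinarith [Real.rpow_nonneg ht p]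
    linarith
  · rcases le_or_gt (-1) t with ht1 | ht1
    · rw [abs_of_nonneg (by linarith : (0:ℝ) ≤ 1 + t), abs_of_neg ht]
      exact caseB hp1 hp2 hC ht1 ht.le
    · rw [abs_of_neg (by linarith : 1 + t < 0), abs_of_neg ht]
      have h1 : (-(1+t)) ^ p ≤ (-t) ^ p :=
        Real.rpow_le_rpow (by linarith) (by linarith) hp0.le
      have h2 := young_aux hp1 (-t) (by linarith)
      have : (1 + p * (p - 1) ^ (p - 1)) * (-t) ^ p
          = (-t) ^ p + p * (p - 1) ^ (p - 1) * (-t) ^ p := by ring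
      rw [this]
      linarith

theorem stmt_10 {X : Type*} [MeasurableSpace X] (μ : Measure X)
    [IsFiniteMeasure μ] (m₀ : ℝ) (hm₀ : m₀ = (μ Set.univ).toReal)
    (hm₀pos : 0 < m₀) (p : ℝ) (hp1 : 1 < p) (hp2 : p < 2) (v : X → ℝ)
    (hv : MemLp v (ENNReal.ofReal p) μ)
    (hmean : ∫ x, v x ∂μ = 0)
    (hcase : (p - 1) * (∫ x, |v x| ^ p ∂μ) ^ (1 / p) ≤ m₀ ^ (1 / p)) :
    ∫ x, |1 + v x| ^ p ∂μ ≤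
      m₀ + (1 + p * (p - 1) ^ (p - 1)) * ∫ x, |v x| ^ p ∂μ := by
  have hp0 : (0:ℝ) < p := lt_trans one_pos hp1
  set C : ℝ := 1 + p * (p - 1) ^ (p - 1) with hCdef
  have hpne : ENNReal.ofReal p ≠ 0 := by
    simp [ENNReal.ofReal_eq_zero, not_le, hp0]
  have hptop : ENNReal.ofReal p ≠ ⊤ := ENNReal.ofReal_ne_top
  have hto : (ENNReal.ofReal p).toReal = p := ENNReal.toReal_ofReal hp0.le
  -- integrability
  have hv1 : Integrable v μ := hv.integrable (by
    rw [← ENNReal.ofReal_one]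
    exact ENNReal.ofReal_le_ofReal hp1.le)
  have hvp : Integrable (fun x => |v x| ^ p) μ := by
    have := hv.integrable_norm_rpow hpne hptop
    simpa [hto, Real.norm_eq_abs] using this
  have h1v : MemLp (fun x => 1 + v x) (ENNReal.ofReal p) μ :=
    (memLp_const (1:ℝ)).add hv
  have h1vp : Integrable (fun x => |1 + v x| ^ p) μ := by
    have := h1v.integrable_norm_rpow hpne hptop
    simpa [hto, Real.norm_eq_abs] using this
  have hrhs : Integrable (fun x => 1 + p * v x + C * |v x| ^ p) μ :=
    ((integrable_const (1:ℝ)).add (hv1.const_mul p)).add (hvp.const_mul C)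
  have hmono : ∫ x, |1 + v x| ^ p ∂μ ≤ ∫ x, (1 + p * v x + C * |v x| ^ p) ∂μ :=
    integral_mono h1vp hrhs (fun x => pointwise_ineq hp1 hp2 (v x))
  have hsplit : ∫ x, (1 + p * v x + C * |v x| ^ p) ∂μ
      = m₀ + C * ∫ x, |v x| ^ p ∂μ := by
    have hia : Integrable (fun x => 1 + p * v x) μ :=
      (integrable_const (1:ℝ)).add (hv1.const_mul p)
    have hib : Integrable (fun x => C * |v x| ^ p) μ := hvp.const_mul C
    have hic : Integrable (fun x => p * v x) μ := hv1.const_mul p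
    rw [integral_add hia hib, integral_add (integrable_const (1:ℝ)) hic,
      integral_const, integral_const_mul, integral_const_mul, hmean]
    simp [hm₀, Measure.real]
  linarith [hmono.trans_eq hsplit]
end
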